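/- Let y, z : V → ℝ^n be analytic solutions on a connected neighborhood V ⊆ U of 0 of the system ∂y_r/∂x_u + Σ_{s=1}^n f_{rsu} y_s = 0 (for all 1 ≤ r ≤ n, 1 ≤ u ≤ k), with y(0) = z(0). Then y = z on a neighborhood of 0. -/

import Mathlib

/-- Uniqueness: two analytic solutions of the linear system
`∂y_r/∂x_u + ∑_s f_{rsu} y_s = 0` on a connected neighborhood `V ⊆ U` of `0` that agree at `0`
coincide on a neighborhood of `0`. -/
theorem stmt_8 (n k : ℕ) (hn : 1 ≤ n) (hk : 1 ≤ k)
    (U : Set (Fin k → ℝ)) (hUopen : IsOpen U) (hU0 : (0 : Fin k → ℝ) ∈ U)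
    (f : Fin n → Fin n → Fin k → (Fin k → ℝ) → ℝ)
    (hf : ∀ r s u, AnalyticOnNhd ℝ (f r s u) U)
    (V : Set (Fin k → ℝ)) (hVopen : IsOpen V) (hVconn : IsConnected V)
    (hV0 : (0 : Fin k → ℝ) ∈ V) (hVU : V ⊆ U)
    (y z : (Fin k → ℝ) → Fin n → ℝ)
    (hy : AnalyticOnNhd ℝ y V) (hz : AnalyticOnNhd ℝ z V)
    (hysys : ∀ x ∈ V, ∀ (r : Fin n) (u : Fin k),
      fderiv ℝ (fun t => y t r) x (Pi.single u 1) + ∑ s, f r s u x * y x s = 0)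
    (hzsys : ∀ x ∈ V, ∀ (r : Fin n) (u : Fin k),
      fderiv ℝ (fun t => z t r) x (Pi.single u 1) + ∑ s, f r s u x * z x s = 0)
    (h0 : y 0 = z 0) :
    ∃ V' : Set (Fin k → ℝ), IsOpen V' ∧ (0 : Fin k → ℝ) ∈ V' ∧ Set.EqOn y z V' := by
  obtain ⟨ε, hε, hball⟩ := Metric.isOpen_iff.mp hVopen 0 hV0
  refine ⟨Metric.ball 0 ε, Metric.isOpen_ball, Metric.mem_ball_self hε, ?_⟩
  intro x hx
  rcases eq_or_ne x 0 with rfl | hx0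
  · exact h0
  have hxn : 0 < ‖x‖ := norm_pos_iff.mpr hx0
  have hxε : ‖x‖ < ε := by simpa [dist_zero_right] using hx
  set T : ℝ := ε / ‖x‖ with hTdef
  have hT1 : 1 < T := (one_lt_div hxn).mpr hxε
  set a : ℝ := -(1/2) with hadef
  set b : ℝ := (1 + T) / 2 with hbdef
  have hab : a ≤ b := by rw [hadef, hbdef]; linarith
  have hb1 : 1 ≤ b := by rw [hbdef]; linarith
  have hbT : b < T := by rw [hbdef]; linarith
  -- points on the segment stay in the ball
  have hseg : ∀ t : ℝ, t ∈ Set.Icc a b → t • x ∈ Metric.ball (0 : Fin k → ℝ) ε := by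
    intro t ht
    rw [Metric.mem_ball, dist_zero_right, norm_smul]
    have h1 : |t| ≤ b := by
      rw [abs_le]
      refine ⟨le_trans ?_ ht.1, ht.2⟩
      rw [hadef, hbdef]; linarith
    have hTx : T * ‖x‖ = ε := div_mul_cancel₀ ε (ne_of_gt hxn)
    calc ‖t‖ * ‖x‖ ≤ b * ‖x‖ := by
            exact mul_le_mul_of_nonneg_right h1 (norm_nonneg x)
      _ < T * ‖x‖ := by exact mul_lt_mul_of_pos_right hbT hxn
      _ = ε := hTx
  -- the clamping function
  have hclamp : ∀ t : ℝ, min (max t a) b ∈ Set.Icc a b :=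
    fun t => ⟨le_min (le_max_right t a) hab, min_le_right _ _⟩
  -- the compact segment and a bound on the coefficients there
  set S : Set (Fin k → ℝ) := (fun t : ℝ => t • x) '' Set.Icc a b with hSdef
  have hSV : S ⊆ V := by
    rintro p ⟨t, ht, rfl⟩
    exact hball (hseg t ht)
  have hScompact : IsCompact S := isCompact_Icc.image (continuous_id.smul continuous_const)
  set F : (Fin k → ℝ) → ℝ := fun p => ∑ r, ∑ s, ∑ u, |f r s u p| with hFdef
  have hFc : ContinuousOn F S := by
    refine continuousOn_finset_sum _ fun r _ => continuousOn_finset_sum _ fun s _ =>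
      continuousOn_finset_sum _ fun u _ => ContinuousOn.abs ?_
    exact ((hf r s u).continuousOn).mono (hSV.trans hVU)
  obtain ⟨M, hM⟩ := hScompact.exists_bound_of_continuousOn hFc
  have hsum : ∀ (r : Fin n) (u : Fin k), ∀ p ∈ S, ∑ s, |f r s u p| ≤ M := by
    intro r u p hp
    have h1 : ∑ s, |f r s u p| ≤ ∑ s, ∑ u', |f r s u' p| :=
      Finset.sum_le_sum fun s _ =>
        Finset.single_le_sum (f := fun u' => |f r s u' p|) (fun u' _ => abs_nonneg _) (Finset.mem_univ u)
    have h2 : ∑ s, ∑ u', |f r s u' p| ≤ F p :=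
      Finset.single_le_sum (f := fun r' => ∑ s, ∑ u', |f r' s u' p|)
        (fun r' _ => by positivity) (Finset.mem_univ r)
    have h3 := hM p hp
    rw [Real.norm_eq_abs] at h3
    have h4 : F p ≤ M := le_trans (le_abs_self _) h3
    linarith
  -- the ODE vector field
  set vf : ℝ → (Fin n → ℝ) → Fin n → ℝ :=
    fun t w r => -∑ u, x u * ∑ s, f r s u ((min (max t a) b) • x) * w s with hvfdef
  set K : NNReal := Real.toNNReal ((∑ u, |x u|) * M) with hKdef
  have hv : ∀ t, LipschitzOnWith K (vf t) Set.univ := by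
    intro t
    refine (LipschitzWith.of_dist_le_mul ?_).lipschitzOnWith
    intro w w'
    have hpS : (min (max t a) b) • x ∈ S := ⟨_, hclamp t, rfl⟩
    set p : Fin k → ℝ := (min (max t a) b) • x with hpdef
    rw [dist_pi_le_iff (by positivity)]
    intro r
    rw [Real.dist_eq]
    have key : vf t w r - vf t w' r = ∑ u, x u * ∑ s, f r s u p * (w' s - w s) := by
      rw [hvfdef]
      simp only [neg_sub_neg]
      rw [← Finset.sum_sub_distrib]
      refine Finset.sum_congr rfl fun u _ => ?_
      rw [← mul_sub, ← Finset.sum_sub_distrib]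
      congr 1
      refine Finset.sum_congr rfl fun s _ => ?_
      ring
    rw [key]
    calc |∑ u, x u * ∑ s, f r s u p * (w' s - w s)|
        ≤ ∑ u, |x u * ∑ s, f r s u p * (w' s - w s)| := Finset.abs_sum_le_sum_abs _ _
      _ = ∑ u, |x u| * |∑ s, f r s u p * (w' s - w s)| := by
          refine Finset.sum_congr rfl fun u _ => ?_; rw [abs_mul]
      _ ≤ ∑ u, |x u| * (M * dist w w') := by
          refine Finset.sum_le_sum fun u _ => mul_le_mul_of_nonneg_left ?_ (abs_nonneg _)
          calc |∑ s, f r s u p * (w' s - w s)|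
              ≤ ∑ s, |f r s u p * (w' s - w s)| := Finset.abs_sum_le_sum_abs _ _
            _ = ∑ s, |f r s u p| * |w' s - w s| := by
                refine Finset.sum_congr rfl fun s _ => ?_; rw [abs_mul]
            _ ≤ ∑ s, |f r s u p| * dist w w' := by
                refine Finset.sum_le_sum fun s _ =>
                  mul_le_mul_of_nonneg_left ?_ (abs_nonneg _)
                calc |w' s - w s| = dist (w' s) (w s) := (Real.dist_eq _ _).symm
                  _ ≤ dist w' w := dist_le_pi_dist w' w s
                  _ = dist w w' := dist_comm w' w
            _ = (∑ s, |f r s u p|) * dist w w' := by rw [Finset.sum_mul]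
            _ ≤ M * dist w w' := mul_le_mul_of_nonneg_right (hsum r u p hpS) dist_nonneg
      _ = (∑ u, |x u|) * M * dist w w' := by rw [← Finset.sum_mul, mul_assoc]
      _ ≤ ↑K * dist w w' :=
          mul_le_mul_of_nonneg_right (Real.le_coe_toNNReal _) dist_nonneg
  -- solutions of the PDE restrict to solutions of the ODE along the line t ↦ t • x
  have deriv_key : ∀ (Y : (Fin k → ℝ) → Fin n → ℝ),
      AnalyticOnNhd ℝ Y V →
      (∀ p ∈ V, ∀ (r : Fin n) (u : Fin k),
        fderiv ℝ (fun t => Y t r) p (Pi.single u 1) + ∑ s, f r s u p * Y p s = 0) →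
      ∀ t ∈ Set.Ioo a b, HasDerivAt (fun τ => Y (τ • x)) (vf t (Y (t • x))) t := by
    intro Y hY hYsys t ht
    have hπ : min (max t a) b = t := by
      rw [max_eq_left ht.1.le, min_eq_left ht.2.le]
    have hpV : t • x ∈ V := hball (hseg t ⟨ht.1.le, ht.2.le⟩)
    rw [hasDerivAt_pi]
    intro r
    have hdY : DifferentiableAt ℝ Y (t • x) := (hY _ hpV).differentiableAt
    have hdYr : DifferentiableAt ℝ (fun q => Y q r) (t • x) := differentiableAt_pi.mp hdY r
    have hline : HasDerivAt (fun τ : ℝ => τ • x) x t := by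
      simpa using (hasDerivAt_id t).smul_const x
    have hcomp := hdYr.hasFDerivAt.comp_hasDerivAt t hline
    convert hcomp using 1
    · rfl
    set D := fderiv ℝ (fun q => Y q r) (t • x) with hDdef
    have hxsum : x = ∑ u, x u • (Pi.single u 1 : Fin k → ℝ) := by
      funext j
      simp [Pi.single_apply, Finset.sum_ite_eq', Finset.mem_univ]
    have hDx : D x = ∑ u, x u * D (Pi.single u 1) := by
      conv_lhs => rw [hxsum]
      rw [map_sum]
      exact Finset.sum_congr rfl fun u _ => by rw [map_smul, smul_eq_mul]
    have hDu : ∀ u : Fin k, D (Pi.single u 1) = -∑ s, f r s u (t • x) * Y (t • x) s := by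
      intro u
      have := hYsys (t • x) hpV r u
      linarith
    rw [hDx]
    rw [hvfdef]
    simp only [hπ]
    rw [neg_eq_iff_eq_neg, ← Finset.sum_neg_distrib]
    refine Finset.sum_congr rfl fun u _ => ?_
    rw [hDu u]
    ring
  -- continuity of the restricted curves
  have hcont : ∀ (Y : (Fin k → ℝ) → Fin n → ℝ), AnalyticOnNhd ℝ Y V →
      ContinuousOn (fun τ : ℝ => Y (τ • x)) (Set.Icc a b) := by
    intro Y hY
    exact (hY.continuousOn).comp
      ((continuous_id.smul continuous_const).continuousOn)
      (fun t ht => hball (hseg t ht))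
  have h0mem : (0 : ℝ) ∈ Set.Ioo a b := ⟨by rw [hadef]; norm_num, by linarith⟩
  have := ODE_solution_unique_of_mem_Icc (v := vf) (s := fun _ => Set.univ) (K := K) (fun t _ => hv t)
    h0mem (hcont y hy) (fun t ht => deriv_key y hy hysys t ht) (fun _ _ => trivial)
    (hcont z hz) (fun t ht => deriv_key z hz hzsys t ht) (fun _ _ => trivial)
    (by simp [h0])
  have h1mem : (1 : ℝ) ∈ Set.Icc a b := ⟨by rw [hadef]; norm_num, hb1⟩
  have := this h1mem
  simpa using this
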